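/- arXiv:2410.18863 — 3 statements merged into one kernel-verified Lean document; each statement's English description precedes it below -/
import Mathlib

section
/- Let a ∈ ℝ with 0 < a < 1, λ ∈ ℂ with |λ| = 1, and let z1, z2, z3 be points on the unit circle satisfying the polynomial identity z(z²-a²) - λ(1-a²z²) = (z-z1)(z-z2)(z-z3). Then z̄1z2 + z1z̄2 + z̄2z3 + z2z̄3 + z̄1z3 + z1z̄3 = a⁴ - 3. -/
open Complex

/-- key invariance identity in the proof of Reznik's conjecture:
`z̄1 z2 + z1 z̄2 + z̄2 z3 + z2 z̄3 + z̄1 z3 + z1 z̄3 = a⁴ - 3`. -/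
theorem blaschke3_mixed_terms_invariant
    (a : ℝ) (ha0 : 0 < a) (ha1 : a < 1)
    (lam : ℂ) (hlam : ‖lam‖ = 1)
    (z1 z2 z3 : ℂ)
    (h1 : ‖z1‖ = 1) (h2 : ‖z2‖ = 1) (h3 : ‖z3‖ = 1)
    (hid : ∀ z : ℂ, z * (z ^ 2 - (a : ℂ) ^ 2) - lam * (1 - (a : ℂ) ^ 2 * z ^ 2)
      = (z - z1) * (z - z2) * (z - z3)) :
    (starRingEnd ℂ) z1 * z2 + z1 * (starRingEnd ℂ) z2
      + (starRingEnd ℂ) z2 * z3 + z2 * (starRingEnd ℂ) z3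
      + (starRingEnd ℂ) z1 * z3 + z1 * (starRingEnd ℂ) z3
      = (a : ℂ) ^ 4 - 3 := by
  have hs1 : z1 + z2 + z3 = -lam * (a : ℂ) ^ 2 := by
    linear_combination ((1:ℂ)/2) * hid 1 + ((1:ℂ)/2) * hid (-1) - hid 0
  have hc : (starRingEnd ℂ) z1 + (starRingEnd ℂ) z2 + (starRingEnd ℂ) z3
      = -(starRingEnd ℂ) lam * (a : ℂ) ^ 2 := by
    have := congrArg (starRingEnd ℂ) hs1
    simpa using this
  have hlam2 : lam * (starRingEnd ℂ) lam = 1 := by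
    rw [Complex.mul_conj, Complex.normSq_eq_norm_sq, hlam]; norm_num
  have hz1 : z1 * (starRingEnd ℂ) z1 = 1 := by
    rw [Complex.mul_conj, Complex.normSq_eq_norm_sq, h1]; norm_num
  have hz2 : z2 * (starRingEnd ℂ) z2 = 1 := by
    rw [Complex.mul_conj, Complex.normSq_eq_norm_sq, h2]; norm_num
  have hz3 : z3 * (starRingEnd ℂ) z3 = 1 := by
    rw [Complex.mul_conj, Complex.normSq_eq_norm_sq, h3]; norm_num
  linear_combination (z1 + z2 + z3) * hc + (-(starRingEnd ℂ) lam * (a : ℂ) ^ 2) * hs1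
    + (a : ℂ) ^ 4 * hlam2 - hz1 - hz2 - hz3
end

section
/- Let a ∈ ℝ with 0 < a < 1, λ ∈ ℂ with |λ| = 1, and let z1, z2, z3 be points on the unit circle with z(z²-a²) - λ(1-a²z²) = (z-z1)(z-z2)(z-z3). Let rj be the distance from zj to the midpoint of the opposite side of the triangle z1z2z3. Then r1² + r2² + r3² = 9/2 - (3/4)(a⁴ - 3), a constant independent of λ. (Reznik's conjecture for Poncelet triangles.) -/
open Complex

/-- Reznik's conjecture for Poncelet triangles: with `r j` the distance from
vertex `z j` to the midpoint of the opposite side, `r1² + r2² + r3² = 9/2 - (3/4)(a⁴-3)`,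
a constant independent of `λ`. -/
theorem reznik_conjecture_poncelet_triangles
    (a : ℝ) (ha0 : 0 < a) (ha1 : a < 1)
    (lam : ℂ) (hlam : ‖lam‖ = 1)
    (z1 z2 z3 : ℂ)
    (h1 : ‖z1‖ = 1) (h2 : ‖z2‖ = 1) (h3 : ‖z3‖ = 1)
    (hid : ∀ z : ℂ, z * (z ^ 2 - (a : ℂ) ^ 2) - lam * (1 - (a : ℂ) ^ 2 * z ^ 2)
      = (z - z1) * (z - z2) * (z - z3))
    (r1 r2 r3 : ℝ)
    (hr1 : r1 = ‖z1 - (z2 + z3) / 2‖)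
    (hr2 : r2 = ‖z2 - (z1 + z3) / 2‖)
    (hr3 : r3 = ‖z3 - (z1 + z2) / 2‖) :
    r1 ^ 2 + r2 ^ 2 + r3 ^ 2 = 9 / 2 - (3 / 4) * (a ^ 4 - 3) := by
  have hs : z1 + z2 + z3 = -lam * (a : ℂ) ^ 2 := by
    linear_combination ((1:ℂ)/2) * hid 1 + ((1:ℂ)/2) * hid (-1) - hid 0
  have hN : Complex.normSq (z1 + z2 + z3) = a ^ 4 := by
    rw [hs]
    have hl : Complex.normSq lam = 1 := by
      rw [Complex.normSq_eq_norm_sq, hlam]; norm_num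
    have : Complex.normSq (-lam * (a : ℂ) ^ 2)
        = Complex.normSq lam * Complex.normSq ((a : ℂ)) ^ 2 := by
      rw [Complex.normSq_mul, Complex.normSq_neg]
      rw [← map_pow]
    rw [this, hl, Complex.normSq_ofReal]; ring
  have hn1 : Complex.normSq z1 = 1 := by rw [Complex.normSq_eq_norm_sq, h1]; norm_num
  have hn2 : Complex.normSq z2 = 1 := by rw [Complex.normSq_eq_norm_sq, h2]; norm_num
  have hn3 : Complex.normSq z3 = 1 := by rw [Complex.normSq_eq_norm_sq, h3]; norm_num
  -- express 4 rj^2 as normSq of 2*zj - (other two)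
  have q1 : 4 * r1 ^ 2 = Complex.normSq (2 * z1 - z2 - z3) := by
    have : (2 * z1 - z2 - z3) = 2 * (z1 - (z2 + z3) / 2) := by ring
    rw [this, Complex.normSq_mul, hr1, Complex.sq_norm]
    norm_num [Complex.normSq_apply]
  have q2 : 4 * r2 ^ 2 = Complex.normSq (2 * z2 - z1 - z3) := by
    have : (2 * z2 - z1 - z3) = 2 * (z2 - (z1 + z3) / 2) := by ring
    rw [this, Complex.normSq_mul, hr2, Complex.sq_norm]
    norm_num [Complex.normSq_apply]
  have q3 : 4 * r3 ^ 2 = Complex.normSq (2 * z3 - z1 - z2) := by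
    have : (2 * z3 - z1 - z2) = 2 * (z3 - (z1 + z2) / 2) := by ring
    rw [this, Complex.normSq_mul, hr3, Complex.sq_norm]
    norm_num [Complex.normSq_apply]
  have key : 4 * r1 ^ 2 + 4 * r2 ^ 2 + 4 * r3 ^ 2 = 27 - 3 * a ^ 4 := by
    rw [q1, q2, q3]
    simp only [Complex.normSq_apply, Complex.sub_re, Complex.sub_im, Complex.add_re,
      Complex.add_im, Complex.mul_re, Complex.mul_im, Complex.re_ofNat,
      Complex.im_ofNat] at hn1 hn2 hn3 hN ⊢
    linear_combination 9 * hn1 + 9 * hn2 + 9 * hn3 - 3 * hN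
  linarith
end

section
/- Let a ∈ ℝ with 0 < a < 1, λ ∈ ℂ with |λ| = 1, and z1, z2, z3 on the unit circle satisfying z(z²-a²) - λ(1-a²z²) = (z-z1)(z-z2)(z-z3). Then (z1+z̄1)(z2+z̄2) + (z1+z̄1)(z3+z̄3) + (z2+z̄2)(z3+z̄3) = -3 + a⁴ - 2a². -/
open Complex

/-- combining the modulus equations at the two foci yields
`(z1+z̄1)(z2+z̄2) + (z1+z̄1)(z3+z̄3) + (z2+z̄2)(z3+z̄3) = -3 + a⁴ - 2a²`. -/
theorem blaschke3_real_parts_product_identity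
    (a : ℝ) (ha0 : 0 < a) (ha1 : a < 1)
    (lam : ℂ) (hlam : ‖lam‖ = 1)
    (z1 z2 z3 : ℂ)
    (h1 : ‖z1‖ = 1) (h2 : ‖z2‖ = 1) (h3 : ‖z3‖ = 1)
    (hid : ∀ z : ℂ, z * (z ^ 2 - (a : ℂ) ^ 2) - lam * (1 - (a : ℂ) ^ 2 * z ^ 2)
      = (z - z1) * (z - z2) * (z - z3)) :
    (z1 + (starRingEnd ℂ) z1) * (z2 + (starRingEnd ℂ) z2)
      + (z1 + (starRingEnd ℂ) z1) * (z3 + (starRingEnd ℂ) z3)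
      + (z2 + (starRingEnd ℂ) z2) * (z3 + (starRingEnd ℂ) z3)
      = -3 + (a : ℂ) ^ 4 - 2 * (a : ℂ) ^ 2 := by
  have hz1 : z1 ≠ 0 := by intro h; rw [h] at h1; simp at h1
  have hz2 : z2 ≠ 0 := by intro h; rw [h] at h2; simp at h2
  have hz3 : z3 ≠ 0 := by intro h; rw [h] at h3; simp at h3
  have hc1 : (starRingEnd ℂ) z1 = z1⁻¹ := (Complex.inv_eq_conj h1).symm
  have hc2 : (starRingEnd ℂ) z2 = z2⁻¹ := (Complex.inv_eq_conj h2).symm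
  have hc3 : (starRingEnd ℂ) z3 = z3⁻¹ := (Complex.inv_eq_conj h3).symm
  have hQ : z1 * z2 * z3 = lam := by linear_combination hid 0
  have hP : z1*z2 + z1*z3 + z2*z3 = -(a:ℂ)^2 := by
    linear_combination -(1/2) * hid 1 + (1/2) * hid (-1)
  have hS : z1 + z2 + z3 = -(lam * (a:ℂ)^2) := by
    linear_combination (1/2) * hid 1 + (1/2) * hid (-1) - hid 0
  have hSQ : z1 + z2 + z3 = -((a:ℂ)^2 * (z1*z2*z3)) := by
    rw [hQ]; linear_combination hS
  have A1 : z1⁻¹*z2⁻¹ + z1⁻¹*z3⁻¹ + z2⁻¹*z3⁻¹ = -(a:ℂ)^2 := by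
    field_simp
    linear_combination hSQ
  have B : (z1+z2+z3) * (z1⁻¹+z2⁻¹+z3⁻¹) = (a:ℂ)^4 := by
    field_simp
    linear_combination (z1+z2+z3)*hP - (a:ℂ)^2*hSQ
  have A2 : z1*z2⁻¹ + z2*z1⁻¹ + z1*z3⁻¹ + z3*z1⁻¹ + z2*z3⁻¹ + z3*z2⁻¹
      = (a:ℂ)^4 - 3 := by
    have h1' : z1 * z1⁻¹ = 1 := mul_inv_cancel₀ hz1
    have h2' : z2 * z2⁻¹ = 1 := mul_inv_cancel₀ hz2
    have h3' : z3 * z3⁻¹ = 1 := mul_inv_cancel₀ hz3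
    linear_combination B - h1' - h2' - h3'
  rw [hc1, hc2, hc3]
  linear_combination hP + A1 + A2
end
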